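/- Let M ∈ ℝ. There exists a constant C (depending only on M) such that for all τ ∈ ℝ with |M·τ| ≤ 1/2 and all θ ∈ ℝ, the unique solution u_{M,τ}(θ) of u = M·cos(θ − τ·u) satisfies |u_{M,τ}(θ) − M·cos θ − (M²/2)·τ·sin(2θ)| ≤ C·τ². -/

import Mathlib

open Classical in

/-- `implicitSol M τ θ` is the unique real `u` with `u = M * cos (θ - τ * u)`
(which exists and is unique whenever `|M * τ| < 1`), and `0` otherwise. -/
noncomputable def implicitSol (M τ θ : ℝ) : ℝ :=
  if h : ∃! u : ℝ, u = M * Real.cos (θ - τ * u) then h.choose else 0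

/-- Cosine is 1-Lipschitz (pointwise form). -/
lemma abs_cos_sub_cos_le' (a b : ℝ) : |Real.cos a - Real.cos b| ≤ |a - b| := by
  rw [Real.cos_sub_cos]
  have h1 : |Real.sin ((a + b) / 2)| ≤ 1 := Real.abs_sin_le_one _
  have h2 : |Real.sin ((a - b) / 2)| ≤ |(a - b) / 2| := Real.abs_sin_le_abs
  calc |(-2) * Real.sin ((a + b) / 2) * Real.sin ((a - b) / 2)|
      = 2 * |Real.sin ((a + b) / 2)| * |Real.sin ((a - b) / 2)| := by
        rw [abs_mul, abs_mul]; norm_num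
    _ ≤ 2 * 1 * |(a - b) / 2| := by gcongr
    _ = |a - b| := by rw [abs_div, abs_two]; ring

lemma existsUnique_fixed (M τ θ : ℝ) (h : |M * τ| ≤ 1 / 2) :
    ∃! u : ℝ, u = M * Real.cos (θ - τ * u) := by
  set f : ℝ → ℝ := fun u => M * Real.cos (θ - τ * u) with hf
  have lip : LipschitzWith (1/2 : NNReal) f := by
    intro a b
    simp only [edist_dist, Real.dist_eq, hf]
    rw [← ENNReal.ofReal_coe_nnreal, ← ENNReal.ofReal_mul (by positivity)]
    apply ENNReal.ofReal_le_ofReal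
    have h0 : M * Real.cos (θ - τ * a) - M * Real.cos (θ - τ * b)
        = M * (Real.cos (θ - τ * a) - Real.cos (θ - τ * b)) := by ring
    rw [h0, abs_mul]
    calc |M| * |Real.cos (θ - τ * a) - Real.cos (θ - τ * b)|
        ≤ |M| * |(θ - τ * a) - (θ - τ * b)| :=
          mul_le_mul_of_nonneg_left (abs_cos_sub_cos_le' _ _) (abs_nonneg M)
      _ = |M * τ| * |a - b| := by
          rw [show (θ - τ * a) - (θ - τ * b) = (τ) * (b - a) by ring,
            abs_mul, ← abs_mul, abs_mul, abs_mul, abs_sub_comm]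
          ring
      _ ≤ ((1/2 : NNReal) : ℝ) * |a - b| := by push_cast; gcongr
  have hc : ContractingWith (1/2 : NNReal) f :=
    ⟨by rw [← NNReal.coe_lt_coe]; norm_num, lip⟩
  refine ⟨hc.fixedPoint f, (hc.fixedPoint_isFixedPt).symm, fun y hy => ?_⟩
  exact hc.fixedPoint_unique hy.symm

lemma implicitSol_eq (M τ θ : ℝ) (h : |M * τ| ≤ 1 / 2) :
    implicitSol M τ θ = M * Real.cos (θ - τ * implicitSol M τ θ) := by
  have he := existsUnique_fixed M τ θ h
  rw [implicitSol, dif_pos he]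
  exact he.choose_spec.1

/-- For each `M` there is a constant `C = C(M)` such that for all `τ` with
`|M * τ| ≤ 1/2` and all `θ`, the unique solution `u_{M,τ}(θ)` of `u = M * cos (θ - τ * u)`
satisfies `|u_{M,τ}(θ) - M cos θ - (M²/2) τ sin (2θ)| ≤ C τ²`. -/
theorem implicitSol_second_harmonic_expansion (M : ℝ) :
    ∃ C : ℝ, ∀ τ θ : ℝ, |M * τ| ≤ 1 / 2 →
      |implicitSol M τ θ - M * Real.cos θ - M ^ 2 / 2 * τ * Real.sin (2 * θ)| ≤ C * τ ^ 2 := by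
  refine ⟨3 * |M| ^ 3, fun τ θ hτ => ?_⟩
  set u := implicitSol M τ θ with hu_def
  have hu : u = M * Real.cos (θ - τ * u) := implicitSol_eq M τ θ hτ
  have hub : |u| ≤ |M| := by
    rw [hu, abs_mul]
    calc |M| * |Real.cos (θ - τ * u)| ≤ |M| * 1 := by
          gcongr; exact Real.abs_cos_le_one _
      _ = |M| := mul_one _
  have hτu : |τ * u| ≤ |M * τ| := by
    rw [abs_mul, abs_mul]
    calc |τ| * |u| ≤ |τ| * |M| := by gcongr
      _ = |M| * |τ| := mul_comm _ _
  have hτu1 : |τ * u| ≤ 1 := hτu.trans (hτ.trans (by norm_num))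
  -- first-order error of u: |u - M cos θ| ≤ M² |τ|
  have hfirst : |u - M * Real.cos θ| ≤ M ^ 2 * |τ| := by
    rw [hu, show M * Real.cos (θ - τ * u) - M * Real.cos θ
        = M * (Real.cos (θ - τ * u) - Real.cos θ) by ring, abs_mul]
    calc |M| * |Real.cos (θ - τ * u) - Real.cos θ|
        ≤ |M| * |(θ - τ * u) - θ| :=
          mul_le_mul_of_nonneg_left (abs_cos_sub_cos_le' _ _) (abs_nonneg M)
      _ = |M| * (|τ| * |u|) := by rw [show (θ - τ * u) - θ = -(τ * u) by ring,
            abs_neg, abs_mul]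
      _ ≤ |M| * (|τ| * |M|) := by gcongr
      _ = M ^ 2 * |τ| := by rw [← sq_abs M]; ring
  -- bounds on cos(τu) - 1 and sin(τu) - τu
  have hcosb : |Real.cos (τ * u) - 1| ≤ (τ * u) ^ 2 / 2 := by
    rw [abs_sub_comm, abs_of_nonneg (by nlinarith [Real.cos_le_one (τ * u)])]
    nlinarith [Real.one_sub_sq_div_two_le_cos (x := τ * u)]
  have hsinb : |Real.sin (τ * u) - τ * u| ≤ (τ * u) ^ 2 := by
    have hb := Real.sin_bound hτu1
    have h3 : |τ * u| ^ 3 / 6 ≤ (τ * u) ^ 2 / 2 := by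
      have : |τ * u| ^ 3 ≤ |τ * u| ^ 2 * 1 := by
        calc |τ * u| ^ 3 = |τ * u| ^ 2 * |τ * u| := by ring
          _ ≤ |τ * u| ^ 2 * 1 := by gcongr
      nlinarith [sq_abs (τ * u)]
    have h4 : |τ * u| ^ 4 * (5 / 96) ≤ (τ * u) ^ 2 / 2 := by
      have : |τ * u| ^ 4 ≤ |τ * u| ^ 2 * 1 := by
        calc |τ * u| ^ 4 = |τ * u| ^ 2 * (|τ * u| * |τ * u|) := by ring
          _ ≤ |τ * u| ^ 2 * (1 * 1) := by gcongr <;> exact hτu1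
          _ = |τ * u| ^ 2 * 1 := by ring
      nlinarith [sq_abs (τ * u), sq_nonneg (τ * u)]
    calc |Real.sin (τ * u) - τ * u|
        = |(Real.sin (τ * u) - (τ * u - (τ * u) ^ 3 / 6)) + (- (τ * u) ^ 3 / 6)| := by
          ring_nf
      _ ≤ |Real.sin (τ * u) - (τ * u - (τ * u) ^ 3 / 6)| + |(- (τ * u) ^ 3 / 6)| :=
          abs_add_le _ _
      _ ≤ |τ * u| ^ 4 * (5 / 96) + |τ * u| ^ 3 / 6 := by
          gcongr
          · refine hb.trans ?_
            nlinarith [mul_le_mul_of_nonneg_left hτu1 (pow_nonneg (abs_nonneg (τ * u)) 4),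
              pow_nonneg (abs_nonneg (τ * u)) 4]
          rw [show -(τ * u) ^ 3 / 6 = -((τ * u) ^ 3 / 6) by ring, abs_neg, abs_div,
            abs_pow]
          norm_num
      _ ≤ (τ * u) ^ 2 / 2 + (τ * u) ^ 2 / 2 := add_le_add h4 h3
      _ = (τ * u) ^ 2 := by ring
  -- decomposition
  have hdec : u - M * Real.cos θ - M ^ 2 / 2 * τ * Real.sin (2 * θ)
      = M * Real.cos θ * (Real.cos (τ * u) - 1)
        + M * Real.sin θ * (Real.sin (τ * u) - τ * u)
        + M * τ * Real.sin θ * (u - M * Real.cos θ) := by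
    have h2θ : Real.sin (2 * θ) = 2 * Real.sin θ * Real.cos θ := Real.sin_two_mul θ
    have hc : Real.cos (θ - τ * u)
        = Real.cos θ * Real.cos (τ * u) + Real.sin θ * Real.sin (τ * u) :=
      Real.cos_sub θ (τ * u)
    have hu' := hu
    rw [hc] at hu'
    linear_combination hu' - (M ^ 2 / 2 * τ) * h2θ
  have hτu2 : (τ * u) ^ 2 ≤ M ^ 2 * τ ^ 2 := by
    calc (τ * u) ^ 2 = |τ * u| ^ 2 := (sq_abs _).symm
      _ ≤ |M * τ| ^ 2 := pow_le_pow_left₀ (abs_nonneg _) hτu 2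
      _ = (M * τ) ^ 2 := sq_abs _
      _ = M ^ 2 * τ ^ 2 := by ring
  rw [hdec]
  have habs1 : |M * Real.cos θ * (Real.cos (τ * u) - 1)| ≤ |M| * (M ^ 2 * τ ^ 2 / 2) := by
    rw [abs_mul, abs_mul]
    calc |M| * |Real.cos θ| * |Real.cos (τ * u) - 1|
        ≤ |M| * 1 * ((τ * u) ^ 2 / 2) := by
          gcongr; exact Real.abs_cos_le_one _
      _ ≤ |M| * 1 * (M ^ 2 * τ ^ 2 / 2) := by gcongr
      _ = |M| * (M ^ 2 * τ ^ 2 / 2) := by ring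
  have habs2 : |M * Real.sin θ * (Real.sin (τ * u) - τ * u)| ≤ |M| * (M ^ 2 * τ ^ 2) := by
    rw [abs_mul, abs_mul]
    calc |M| * |Real.sin θ| * |Real.sin (τ * u) - τ * u|
        ≤ |M| * 1 * ((τ * u) ^ 2) := by
          gcongr; exact Real.abs_sin_le_one _
      _ ≤ |M| * 1 * (M ^ 2 * τ ^ 2) := by gcongr
      _ = |M| * (M ^ 2 * τ ^ 2) := by ring
  have habs3 : |M * τ * Real.sin θ * (u - M * Real.cos θ)| ≤ |M| * (M ^ 2 * τ ^ 2) := by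
    rw [abs_mul, abs_mul]
    have hstep1 : |M * τ| * |Real.sin θ| ≤ |M| * |τ| := by
      calc |M * τ| * |Real.sin θ| ≤ |M * τ| * 1 :=
            mul_le_mul_of_nonneg_left (Real.abs_sin_le_one _) (abs_nonneg _)
        _ = |M| * |τ| := by rw [mul_one, abs_mul]
    calc |M * τ| * |Real.sin θ| * |u - M * Real.cos θ|
        ≤ (|M| * |τ|) * (M ^ 2 * |τ|) :=
          mul_le_mul hstep1 hfirst (abs_nonneg _)
            (by positivity)
      _ = |M| * (M ^ 2 * (|τ| * |τ|)) := by ring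
      _ = |M| * (M ^ 2 * τ ^ 2) := by rw [← abs_mul, ← sq, abs_sq]
  calc |M * Real.cos θ * (Real.cos (τ * u) - 1)
        + M * Real.sin θ * (Real.sin (τ * u) - τ * u)
        + M * τ * Real.sin θ * (u - M * Real.cos θ)|
      ≤ |M * Real.cos θ * (Real.cos (τ * u) - 1)
        + M * Real.sin θ * (Real.sin (τ * u) - τ * u)|
        + |M * τ * Real.sin θ * (u - M * Real.cos θ)| := abs_add_le _ _
    _ ≤ (|M * Real.cos θ * (Real.cos (τ * u) - 1)|
        + |M * Real.sin θ * (Real.sin (τ * u) - τ * u)|)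
        + |M * τ * Real.sin θ * (u - M * Real.cos θ)| := by
          gcongr; exact abs_add_le _ _
    _ ≤ (|M| * (M ^ 2 * τ ^ 2 / 2) + |M| * (M ^ 2 * τ ^ 2)) + |M| * (M ^ 2 * τ ^ 2) :=
          add_le_add (add_le_add habs1 habs2) habs3
    _ ≤ 3 * (|M| * M ^ 2) * τ ^ 2 := by nlinarith [abs_nonneg M, sq_nonneg τ, sq_nonneg M]
    _ = 3 * |M| ^ 3 * τ ^ 2 := by rw [← sq_abs M]; ring
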